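/- Let G be the group with presentation ⟨s₁,s₂,s₃,h | [sₖ,h] for 1≤k≤3, s₁²h, s₂⁴h, s₃⁴h, s₁s₂s₃h⟩. Then there are exactly 3 surjective homomorphisms G → ℤ/2, determined by (φ(s₁),φ(s₂),φ(s₃),φ(h)) ∈ {(1,1,0,0),(1,0,1,0),(0,1,1,0)}. -/

import Mathlib

open FreeGroup

/-- Relators of π₁(M₄) = ⟨s₁,s₂,s₃,h | [sₖ,h] (1≤k≤3), s₁²h, s₂⁴h, s₃⁴h, s₁s₂s₃h⟩,
generators s₁=0, s₂=1, s₃=2, h=3. -/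
def relsM4 : Set (FreeGroup (Fin 4)) :=
  { of 0 * of 3 * (of 0)⁻¹ * (of 3)⁻¹,
    of 1 * of 3 * (of 1)⁻¹ * (of 3)⁻¹,
    of 2 * of 3 * (of 2)⁻¹ * (of 3)⁻¹,
    of 0 ^ 2 * of 3, of 1 ^ 4 * of 3, of 2 ^ 4 * of 3,
    of 0 * of 1 * of 2 * of 3 }

/-- Reduction mod 2, multiplicatively. -/
def mod2 : Multiplicative ℤ →* Multiplicative (ZMod 2) :=
  AddMonoidHom.toMultiplicative (Int.castAddHom (ZMod 2))

def f3 (a b c : ZMod 2) : Fin 4 → Multiplicative (ZMod 2) :=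
  ![Multiplicative.ofAdd a, Multiplicative.ofAdd b, Multiplicative.ofAdd c, 1]

lemma rels_check (a b c : ZMod 2) (h : a + b + c = 0) :
    ∀ r ∈ relsM4, FreeGroup.lift (f3 a b c) r = 1 := by
  intro r hr
  simp only [relsM4, Set.mem_insert_iff, Set.mem_singleton_iff] at hr
  rcases hr with rfl|rfl|rfl|rfl|rfl|rfl|rfl <;>
  · simp only [_root_.map_mul, _root_.map_inv, _root_.map_pow, FreeGroup.lift_apply_of, f3,
      Matrix.cons_val_zero, Matrix.cons_val_one, Matrix.head_cons,
      Matrix.cons_val_two, Matrix.tail_cons, Matrix.cons_val_three]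
    revert h; revert c; revert b; revert a; decide

/-- The homomorphism determined by generator values. -/
def Φ (a b c : ZMod 2) (h : a + b + c = 0) :
    PresentedGroup relsM4 →* Multiplicative (ZMod 2) :=
  PresentedGroup.toGroup (rels_check a b c h)

lemma Φ_of (a b c : ZMod 2) (h : a + b + c = 0) (x : Fin 4) :
    Φ a b c h (PresentedGroup.of x) = f3 a b c x :=
  PresentedGroup.toGroup.of _

lemma surj_of (φ : PresentedGroup relsM4 →* Multiplicative (ZMod 2)) (x : PresentedGroup relsM4)
    (h : φ x = Multiplicative.ofAdd 1) : Function.Surjective φ := by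
  intro y
  have hy : y = 1 ∨ y = Multiplicative.ofAdd 1 := by revert y; decide
  rcases hy with rfl | rfl
  · exact ⟨1, map_one φ⟩
  · exact ⟨x, h⟩

lemma relder : ∀ r ∈ relsM4, (PresentedGroup.mk relsM4 r) = 1 := fun _ hr =>
  (QuotientGroup.eq_one_iff _).mpr (Subgroup.subset_normalClosure hr)

lemma e4 : ((PresentedGroup.of 0 : PresentedGroup relsM4))^2 * PresentedGroup.of 3 = 1 := by
  have h := relder (of (0:Fin 4) ^ 2 * of 3) (by simp [relsM4])
  simpa [_root_.map_mul, _root_.map_pow, PresentedGroup.of] using h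

lemma e7 : (PresentedGroup.of 0 : PresentedGroup relsM4) * PresentedGroup.of 1 *
    PresentedGroup.of 2 * PresentedGroup.of 3 = 1 := by
  have h := relder (of (0:Fin 4) * of 1 * of 2 * of 3) (by simp [relsM4])
  simpa [_root_.map_mul, PresentedGroup.of] using h

lemma classify (φ : PresentedGroup relsM4 →* Multiplicative (ZMod 2))
    (hs : Function.Surjective φ) :
    φ (PresentedGroup.of 3) = 1 ∧
    ((φ (PresentedGroup.of 0), φ (PresentedGroup.of 1), φ (PresentedGroup.of 2)) =
      (Multiplicative.ofAdd (1:ZMod 2), Multiplicative.ofAdd (1:ZMod 2),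
        Multiplicative.ofAdd (0:ZMod 2)) ∨
     (φ (PresentedGroup.of 0), φ (PresentedGroup.of 1), φ (PresentedGroup.of 2)) =
      (Multiplicative.ofAdd (1:ZMod 2), Multiplicative.ofAdd (0:ZMod 2),
        Multiplicative.ofAdd (1:ZMod 2)) ∨
     (φ (PresentedGroup.of 0), φ (PresentedGroup.of 1), φ (PresentedGroup.of 2)) =
      (Multiplicative.ofAdd (0:ZMod 2), Multiplicative.ofAdd (1:ZMod 2),
        Multiplicative.ofAdd (1:ZMod 2))) := by
  have h4 : φ (PresentedGroup.of 0) ^ 2 * φ (PresentedGroup.of 3) = 1 := by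
    have := congrArg φ e4
    simpa [_root_.map_mul, _root_.map_pow] using this
  have h7 : φ (PresentedGroup.of 0) * φ (PresentedGroup.of 1) * φ (PresentedGroup.of 2) *
      φ (PresentedGroup.of 3) = 1 := by
    have := congrArg φ e7
    simpa [_root_.map_mul] using this
  have hne : ¬ (φ (PresentedGroup.of 0) = 1 ∧ φ (PresentedGroup.of 1) = 1 ∧
      φ (PresentedGroup.of 2) = 1 ∧ φ (PresentedGroup.of 3) = 1) := by
    rintro ⟨h0, h1, h2, h3⟩
    have hφ1 : φ = 1 := by
      ext x
      fin_cases x <;> simpa [MonoidHom.one_apply] using (by assumption : _)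
    obtain ⟨x, hx⟩ := hs (Multiplicative.ofAdd (1 : ZMod 2))
    rw [hφ1] at hx
    simp only [MonoidHom.one_apply] at hx
    exact absurd hx (by decide)
  revert h4 h7 hne
  generalize φ (PresentedGroup.of 0) = a
  generalize φ (PresentedGroup.of 1) = b
  generalize φ (PresentedGroup.of 2) = c
  generalize φ (PresentedGroup.of 3) = d
  revert a b c d
  decide

lemma eq_Φ (φ : PresentedGroup relsM4 →* Multiplicative (ZMod 2)) (a b c : ZMod 2)
    (h : a + b + c = 0)
    (h0 : φ (PresentedGroup.of 0) = Multiplicative.ofAdd a)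
    (h1 : φ (PresentedGroup.of 1) = Multiplicative.ofAdd b)
    (h2 : φ (PresentedGroup.of 2) = Multiplicative.ofAdd c)
    (h3 : φ (PresentedGroup.of 3) = 1) : φ = Φ a b c h := by
  ext x
  fin_cases x <;> simp [Φ_of, f3, h0, h1, h2, h3]

/-- There are exactly 3 epimorphisms π₁(M₄) → ℤ/2, with values on (s₁,s₂,s₃,h)
among (1,1,0,0), (1,0,1,0), (0,1,1,0). -/
theorem stmt6 :
    Nat.card {φ : PresentedGroup relsM4 →* Multiplicative (ZMod 2) //
        Function.Surjective φ} = 3 ∧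
    ∀ φ : PresentedGroup relsM4 →* Multiplicative (ZMod 2), Function.Surjective φ →
      (φ (PresentedGroup.of 0), φ (PresentedGroup.of 1), φ (PresentedGroup.of 2),
          φ (PresentedGroup.of 3)) =
            (Multiplicative.ofAdd (1 : ZMod 2), Multiplicative.ofAdd (1 : ZMod 2),
              Multiplicative.ofAdd (0 : ZMod 2), Multiplicative.ofAdd (0 : ZMod 2)) ∨
      (φ (PresentedGroup.of 0), φ (PresentedGroup.of 1), φ (PresentedGroup.of 2),
          φ (PresentedGroup.of 3)) =
            (Multiplicative.ofAdd (1 : ZMod 2), Multiplicative.ofAdd (0 : ZMod 2),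
              Multiplicative.ofAdd (1 : ZMod 2), Multiplicative.ofAdd (0 : ZMod 2)) ∨
      (φ (PresentedGroup.of 0), φ (PresentedGroup.of 1), φ (PresentedGroup.of 2),
          φ (PresentedGroup.of 3)) =
            (Multiplicative.ofAdd (0 : ZMod 2), Multiplicative.ofAdd (1 : ZMod 2),
              Multiplicative.ofAdd (1 : ZMod 2), Multiplicative.ofAdd (0 : ZMod 2)) := by
  have hone : (1 : Multiplicative (ZMod 2)) = Multiplicative.ofAdd (0 : ZMod 2) := rfl
  constructor
  · -- counting
    set S := {φ : PresentedGroup relsM4 →* Multiplicative (ZMod 2) // Function.Surjective φ}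
    let g : Fin 3 → S := fun i =>
      match i with
      | 0 => ⟨Φ 1 1 0 (by decide), surj_of _ (PresentedGroup.of 0) (Φ_of 1 1 0 (by decide) 0)⟩
      | 1 => ⟨Φ 1 0 1 (by decide), surj_of _ (PresentedGroup.of 0) (Φ_of 1 0 1 (by decide) 0)⟩
      | 2 => ⟨Φ 0 1 1 (by decide), surj_of _ (PresentedGroup.of 1) (Φ_of 0 1 1 (by decide) 1)⟩
    have hg : Function.Bijective g := by
      constructor
      · intro i j hij
        have := congrArg (fun s : S => ((s.1 (PresentedGroup.of 0)), (s.1 (PresentedGroup.of 1)))) hij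
        fin_cases i <;> fin_cases j <;>
          simp only [g, Φ_of, f3] at this <;> first | rfl | (exfalso; revert this; decide)
      · rintro ⟨φ, hs⟩
        obtain ⟨h3, hcases⟩ := classify φ hs
        rcases hcases with h | h | h <;> rw [Prod.mk.injEq, Prod.mk.injEq] at h
        · exact ⟨0, Subtype.ext (eq_Φ φ 1 1 0 (by decide) h.1 h.2.1 h.2.2 h3).symm⟩
        · exact ⟨1, Subtype.ext (eq_Φ φ 1 0 1 (by decide) h.1 h.2.1 h.2.2 h3).symm⟩
        · exact ⟨2, Subtype.ext (eq_Φ φ 0 1 1 (by decide) h.1 h.2.1 h.2.2 h3).symm⟩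
    rw [Nat.card_eq_of_equiv_fin (Equiv.ofBijective g hg).symm]
  · intro φ hs
    obtain ⟨h3, hcases⟩ := classify φ hs
    rw [hone] at h3
    rcases hcases with h | h | h <;> rw [Prod.mk.injEq, Prod.mk.injEq] at h
    · exact Or.inl (by rw [h.1, h.2.1, h.2.2, h3])
    · exact Or.inr (Or.inl (by rw [h.1, h.2.1, h.2.2, h3]))
    · exact Or.inr (Or.inr (by rw [h.1, h.2.1, h.2.2, h3]))
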